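/- arXiv:1511.05118 — 5 statements merged into one kernel-verified Lean document; each statement's English description precedes it below -/
import Mathlib

section
/- (Standard decoder, lower bound / worst-case noise.) Fix indices ω_1,…,ω_m ∈ {1,…,n}, the associated sampling matrix M and P_Ω = diag(p_{ω_1},…,p_{ω_m}), and suppose the upper RIP bound holds: (1/m)‖M P^{−1/2} x‖₂² ≤ (1+δ)‖x‖₂² for all x ∈ span(U_k), for some δ ∈ (0,1). Then for every x ∈ span(U_k) and every z₀ ∈ span(U_k), setting the noise vector w₀ := M z₀ and y := M x + w₀, the vector x* := x + z₀ is a minimizer of ‖P_Ω^{−1/2}(M z − y)‖₂ over z ∈ span(U_k) and satisfies ‖x* − x‖₂ ≥ (1/√(m(1+δ)))‖P_Ω^{−1/2} w₀‖₂. -/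
open Matrix

/-- Euclidean norm of a finite real vector. -/
noncomputable def norm2 {d : ℕ} (x : Fin d → ℝ) : ℝ := Real.sqrt (∑ j, x j ^ 2)

/-- The sampling matrix `M ∈ ℝ^{m×n}` associated to fixed indices `ω`. -/
def sampMat {n m : ℕ} (ω : Fin m → Fin n) : Matrix (Fin m) (Fin n) ℝ :=
  Matrix.of fun i j => if j = ω i then 1 else 0

/-- `P^{-1/2}` for `P = diag(p)`. -/
noncomputable def pInvSqrt {n : ℕ} (p : Fin n → ℝ) : Matrix (Fin n) (Fin n) ℝ :=
  Matrix.diagonal fun i => (Real.sqrt (p i))⁻¹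

/-- `P_Ω^{-1/2}`, the diagonal matrix with entries `(p ω_i)^{-1/2}`. -/
noncomputable def pOmInvSqrt {n m : ℕ} (p : Fin n → ℝ) (ω : Fin m → Fin n) :
    Matrix (Fin m) (Fin m) ℝ :=
  Matrix.diagonal fun i => (Real.sqrt (p (ω i)))⁻¹

/-- Standard decoder, lower bound for a worst-case noise: under the upper RIP bound,
for `w₀ := M z₀` with `z₀ ∈ span(U_k)` and `y := Mx + w₀`, the vector `x* := x + z₀` is
a minimizer of `‖P_Ω^{-1/2}(Mz - y)‖₂` over `span(U_k)` and
`‖x* - x‖₂ ≥ (1/√(m(1+δ)))‖P_Ω^{-1/2}w₀‖₂`. -/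
theorem standard_decoder_lower_bound (n k m : ℕ) (hk : 0 < k) (hkn : k ≤ n) (hm : 0 < m)
    (Uk : Matrix (Fin n) (Fin k) ℝ) (hU : Uk.transpose * Uk = 1)
    (p : Fin n → ℝ) (hp : ∀ i, 0 < p i) (hpsum : ∑ i, p i = 1)
    (ω : Fin m → Fin n) (δ : ℝ) (hδ0 : 0 < δ) (hδ1 : δ < 1)
    (hRIP : ∀ x : Fin n → ℝ, (∃ α : Fin k → ℝ, x = Uk.mulVec α) →
      (1 / m) * norm2 ((sampMat ω * pInvSqrt p).mulVec x) ^ 2 ≤ (1 + δ) * norm2 x ^ 2)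
    (x : Fin n → ℝ) (hx : ∃ α : Fin k → ℝ, x = Uk.mulVec α)
    (z₀ : Fin n → ℝ) (hz₀ : ∃ α : Fin k → ℝ, z₀ = Uk.mulVec α) :
    (∀ z : Fin n → ℝ, (∃ α : Fin k → ℝ, z = Uk.mulVec α) →
      norm2 ((pOmInvSqrt p ω).mulVec
          ((sampMat ω).mulVec (x + z₀) - ((sampMat ω).mulVec x + (sampMat ω).mulVec z₀)))
        ≤ norm2 ((pOmInvSqrt p ω).mulVec
          ((sampMat ω).mulVec z - ((sampMat ω).mulVec x + (sampMat ω).mulVec z₀)))) ∧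
    (1 / Real.sqrt (m * (1 + δ))) * norm2 ((pOmInvSqrt p ω).mulVec ((sampMat ω).mulVec z₀))
      ≤ norm2 ((x + z₀) - x) := by

  have hnn : ∀ {d : ℕ} (v : Fin d → ℝ), 0 ≤ norm2 v := fun v => Real.sqrt_nonneg _
  constructor
  · intro z hz
    have h0 : (sampMat ω).mulVec (x + z₀) - ((sampMat ω).mulVec x + (sampMat ω).mulVec z₀) = 0 := by
      rw [Matrix.mulVec_add]; abel
    rw [h0, Matrix.mulVec_zero]
    have : norm2 (0 : Fin m → ℝ) = 0 := by simp [norm2]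
    rw [this]; exact hnn _
  · have hkey : (pOmInvSqrt p ω).mulVec ((sampMat ω).mulVec z₀)
        = (sampMat ω * pInvSqrt p).mulVec z₀ := by
      funext i
      simp [Matrix.mulVec, Matrix.mul_apply, dotProduct, pOmInvSqrt, pInvSqrt,
        sampMat, Matrix.diagonal, Finset.mul_sum, ite_mul, mul_ite, Finset.sum_ite_eq,
        Finset.sum_ite_eq']
    have hR := hRIP z₀ hz₀
    set N := norm2 ((sampMat ω * pInvSqrt p).mulVec z₀) with hN
    have hm' : (0:ℝ) < m := Nat.cast_pos.mpr hm
    have hδ' : (0:ℝ) < 1 + δ := by linarith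
    have hN2 : N ^ 2 ≤ (m * (1 + δ)) * norm2 z₀ ^ 2 := by
      have h2 := mul_le_mul_of_nonneg_left hR hm'.le
      rw [show (m:ℝ) * (1 / m * N ^ 2) = N ^ 2 by field_simp] at h2
      rw [mul_assoc]; exact h2
    have hsq : N ≤ Real.sqrt (m * (1 + δ)) * norm2 z₀ := by
      have h1 : N = Real.sqrt (N ^ 2) := (Real.sqrt_sq (hnn _)).symm
      rw [h1]
      calc Real.sqrt (N ^ 2) ≤ Real.sqrt ((m * (1 + δ)) * norm2 z₀ ^ 2) :=
            Real.sqrt_le_sqrt hN2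
        _ = Real.sqrt (m * (1 + δ)) * norm2 z₀ := by
            rw [Real.sqrt_mul (by positivity), Real.sqrt_sq (hnn _)]
    have hspos : 0 < Real.sqrt (m * (1 + δ)) := Real.sqrt_pos.mpr (by positivity)
    have hgoal : (x + z₀) - x = z₀ := by abel
    rw [hgoal, hkey, one_div, inv_mul_le_iff₀ hspos]
    linarith [hsq]
end

section
/- (Efficient decoder, in-span error bound.) Assume the lower RIP bound (1−δ)‖x‖₂² ≤ (1/m)‖M P^{−1/2} x‖₂² for all x ∈ span(U_k), and ‖M P^{−1/2}‖₂ ≤ M_max. Let g: ℝ → ℝ be nonnegative and nondecreasing on [0,∞) with g(λ_{k+1}) > 0, and let γ > 0. For every x ∈ span(U_k) and w ∈ ℝ^m, let x* be a minimizer over z ∈ ℝ^n of ‖P_Ω^{−1/2}(M z − y)‖₂² + γ zᵀ g(L) z with y = M x + w, and set α* := U_k U_kᵀ x*. Then ‖α* − x‖₂ ≤ (1/√(m(1−δ)))·[(2 + M_max/√(γ g(λ_{k+1})))‖P_Ω^{−1/2} w‖₂ + (M_max √(g(λ_k)/g(λ_{k+1})) + √(γ g(λ_k)))‖x‖₂].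 -/
open Matrix

/-- The matrix of the first `k` columns of `U`. -/
def firstCols {n k : ℕ} (hkn : k ≤ n) (U : Matrix (Fin n) (Fin n) ℝ) :
    Matrix (Fin n) (Fin k) ℝ :=
  Matrix.of fun i j => U i (Fin.castLE hkn j)

/-- `g(L) = U diag(g(λ_1),…,g(λ_n)) Uᵀ` for `L = U diag(λ) Uᵀ`. -/
noncomputable def matFun {n : ℕ} (U : Matrix (Fin n) (Fin n) ℝ) (lam : Fin n → ℝ)
    (g : ℝ → ℝ) : Matrix (Fin n) (Fin n) ℝ :=
  U * Matrix.diagonal (fun i => g (lam i)) * U.transpose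

/- ### auxiliary lemmas -/

lemma norm2_nonneg {d : ℕ} (x : Fin d → ℝ) : 0 ≤ norm2 x := Real.sqrt_nonneg _

lemma norm2_sq {d : ℕ} (x : Fin d → ℝ) : norm2 x ^ 2 = ∑ j, x j ^ 2 := by
  rw [norm2, Real.sq_sqrt]; positivity

lemma norm2_add_le {d : ℕ} (x y : Fin d → ℝ) : norm2 (x + y) ≤ norm2 x + norm2 y := by
  have h : ∀ z : Fin d → ℝ, norm2 z = ‖(WithLp.equiv 2 (Fin d → ℝ)).symm z‖ := by
    intro z
    rw [norm2, EuclideanSpace.norm_eq]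
    congr 1; apply Finset.sum_congr rfl; intro i _
    simp [Real.norm_eq_abs, sq_abs]
  simp only [h]
  rw [show (WithLp.equiv 2 (Fin d → ℝ)).symm (x+y)
      = (WithLp.equiv 2 (Fin d → ℝ)).symm x + (WithLp.equiv 2 (Fin d → ℝ)).symm y from rfl]
  exact norm_add_le _ _

lemma norm2_neg {d : ℕ} (x : Fin d → ℝ) : norm2 (-x) = norm2 x := by simp [norm2]

lemma sampP_apply {n m : ℕ} (p : Fin n → ℝ) (ω : Fin m → Fin n) (v : Fin n → ℝ) (i : Fin m) :
    ((sampMat ω * pInvSqrt p).mulVec v) i = (Real.sqrt (p (ω i)))⁻¹ * v (ω i) := by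
  simp [sampMat, pInvSqrt, Matrix.mulVec, Matrix.mul_apply, dotProduct, Matrix.diagonal,
    Finset.mul_sum, ite_and, Finset.sum_ite_eq']

lemma pOm_samp {n m : ℕ} (p : Fin n → ℝ) (ω : Fin m → Fin n) (v : Fin n → ℝ) :
    (pOmInvSqrt p ω).mulVec ((sampMat ω).mulVec v) = (sampMat ω * pInvSqrt p).mulVec v := by
  funext i
  rw [sampP_apply]
  simp [sampMat, pOmInvSqrt, Matrix.mulVec, dotProduct, Matrix.diagonal,
    Finset.mul_sum, Finset.sum_ite_eq', Matrix.mulVec_diagonal]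

lemma sum_castLE {k n : ℕ} (hk : 0 < k) (h : k ≤ n) (f : Fin n → ℝ) :
    ∑ l : Fin k, f (Fin.castLE h l) = ∑ j : Fin n, if (j:ℕ) < k then f j else 0 := by
  rw [← Finset.sum_filter]
  refine Finset.sum_nbij' (fun l => Fin.castLE h l)
    (fun j => if hj : (j:ℕ) < k then (⟨(j:ℕ), hj⟩ : Fin k) else ⟨0, hk⟩) ?_ ?_ ?_ ?_ ?_ <;>
    intro a ha <;> simp_all [Fin.ext_iff]

lemma dot_mulVec_U {n : ℕ} (U : Matrix (Fin n) (Fin n) ℝ) (hU : U.transpose * U = 1)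
    (c c' : Fin n → ℝ) : (U.mulVec c) ⬝ᵥ (U.mulVec c') = c ⬝ᵥ c' := by
  rw [Matrix.dotProduct_mulVec, ← Matrix.mulVec_transpose, Matrix.mulVec_mulVec, hU,
    Matrix.one_mulVec]

lemma norm2_mulVec_U {n : ℕ} (U : Matrix (Fin n) (Fin n) ℝ) (hU : U.transpose * U = 1)
    (c : Fin n → ℝ) : norm2 (U.mulVec c) = norm2 c := by
  have h1 : ∑ j, (U.mulVec c) j ^ 2 = ∑ j, c j ^ 2 := by
    have := dot_mulVec_U U hU c c
    simpa [dotProduct, pow_two] using this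
  rw [norm2, h1, norm2]

lemma firstCols_mulVec {n k : ℕ} (hk : 0 < k) (hkn : k ≤ n) (U : Matrix (Fin n) (Fin n) ℝ)
    (α : Fin k → ℝ) :
    (firstCols hkn U).mulVec α
      = U.mulVec (fun j => if h : (j:ℕ) < k then α ⟨j, h⟩ else 0) := by
  funext i
  rw [Matrix.mulVec, Matrix.mulVec, dotProduct, dotProduct]
  calc ∑ l : Fin k, firstCols hkn U i l * α l
      = ∑ l : Fin k, (fun j : Fin n => U i j * if h : (j:ℕ) < k then α ⟨j, h⟩ else 0)
          (Fin.castLE hkn l) := Finset.sum_congr rfl fun l _ => by simp [firstCols]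
    _ = ∑ j : Fin n, if (j:ℕ) < k then U i j * (if h : (j:ℕ) < k then α ⟨j, h⟩ else 0) else 0 := by
        simpa using sum_castLE hk hkn
          (fun j : Fin n => U i j * if h : (j:ℕ) < k then α ⟨j, h⟩ else 0)
    _ = ∑ j : Fin n, U i j * (if h : (j:ℕ) < k then α ⟨j, h⟩ else 0) := by
        refine Finset.sum_congr rfl fun j _ => ?_
        by_cases h : (j:ℕ) < k <;> simp [h]

lemma quadForm_eq {n : ℕ} (U : Matrix (Fin n) (Fin n) ℝ) (hU : U.transpose * U = 1)
    (lam : Fin n → ℝ) (g : ℝ → ℝ) (c : Fin n → ℝ) :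
    (U.mulVec c) ⬝ᵥ (matFun U lam g).mulVec (U.mulVec c)
      = ∑ i, g (lam i) * c i ^ 2 := by
  have h1 : (matFun U lam g).mulVec (U.mulVec c)
      = U.mulVec ((Matrix.diagonal (fun i => g (lam i))).mulVec c) := by
    have h2 : U.transpose.mulVec (U.mulVec c) = c := by
      rw [Matrix.mulVec_mulVec, hU, Matrix.one_mulVec]
    rw [matFun, ← Matrix.mulVec_mulVec, h2, ← Matrix.mulVec_mulVec]
  rw [h1, dot_mulVec_U U hU, dotProduct]
  refine Finset.sum_congr rfl fun i _ => ?_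
  rw [Matrix.mulVec_diagonal]; ring

set_option maxHeartbeats 1000000 in
/-- Efficient decoder, error bound on the in-span component `α* = U_k U_kᵀ x*`. -/
theorem efficient_decoder_alpha_bound (n k m : ℕ) (hk : 0 < k) (hkn : k < n) (hm : 0 < m)
    (U : Matrix (Fin n) (Fin n) ℝ) (hU : U.transpose * U = 1)
    (lam : Fin n → ℝ) (hmono : Monotone lam) (hnonneg : ∀ i, 0 ≤ lam i)
    (ik ik1 : Fin n) (hik : (ik : ℕ) = k - 1) (hik1 : (ik1 : ℕ) = k)
    (p : Fin n → ℝ) (hp : ∀ i, 0 < p i) (hpsum : ∑ i, p i = 1)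
    (ω : Fin m → Fin n) (δ : ℝ) (hδ0 : 0 < δ) (hδ1 : δ < 1)
    (hRIP : ∀ x : Fin n → ℝ,
      (∃ α : Fin k → ℝ, x = (firstCols hkn.le U).mulVec α) →
      (1 - δ) * norm2 x ^ 2 ≤ (1 / m) * norm2 ((sampMat ω * pInvSqrt p).mulVec x) ^ 2)
    (Mmax : ℝ)
    (hMmax : ∀ x : Fin n → ℝ, norm2 ((sampMat ω * pInvSqrt p).mulVec x) ≤ Mmax * norm2 x)
    (g : ℝ → ℝ) (hgnn : ∀ t, 0 ≤ t → 0 ≤ g t)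
    (hgmono : ∀ s t, 0 ≤ s → s ≤ t → g s ≤ g t)
    (hgk1 : 0 < g (lam ik1))
    (γ : ℝ) (hγ : 0 < γ)
    (x : Fin n → ℝ) (hx : ∃ α : Fin k → ℝ, x = (firstCols hkn.le U).mulVec α)
    (w : Fin m → ℝ)
    (xstar : Fin n → ℝ)
    (hmin : ∀ z : Fin n → ℝ,
      norm2 ((pOmInvSqrt p ω).mulVec
            ((sampMat ω).mulVec xstar - ((sampMat ω).mulVec x + w))) ^ 2
          + γ * (xstar ⬝ᵥ (matFun U lam g).mulVec xstar)
        ≤ norm2 ((pOmInvSqrt p ω).mulVec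
            ((sampMat ω).mulVec z - ((sampMat ω).mulVec x + w))) ^ 2
          + γ * (z ⬝ᵥ (matFun U lam g).mulVec z)) :
    norm2 ((firstCols hkn.le U * (firstCols hkn.le U).transpose).mulVec xstar - x)
      ≤ (1 / Real.sqrt (m * (1 - δ))) *
        ((2 + Mmax / Real.sqrt (γ * g (lam ik1))) * norm2 ((pOmInvSqrt p ω).mulVec w)
          + (Mmax * Real.sqrt (g (lam ik) / g (lam ik1)) + Real.sqrt (γ * g (lam ik)))
            * norm2 x) := by
  obtain ⟨αx, hxα⟩ := hx
  set V := firstCols hkn.le U with hV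
  set A := sampMat ω * pInvSqrt p with hA
  set w' := (pOmInvSqrt p ω).mulVec w with hw'
  set gk := g (lam ik) with hgk
  set gk1 := g (lam ik1) with hgk1def
  set W := norm2 w' with hW
  set X := norm2 x with hX
  set G := Real.sqrt (γ * gk1) with hGdef
  set sq := Real.sqrt (γ * gk) with hsqdef
  have hUUT : U * U.transpose = 1 := mul_eq_one_comm.mp hU
  set c : Fin n → ℝ := U.transpose.mulVec xstar with hc
  have hxs : xstar = U.mulVec c := by
    rw [hc, Matrix.mulVec_mulVec, hUUT, Matrix.one_mulVec]
  set clow : Fin n → ℝ := fun j => if (j:ℕ) < k then c j else 0 with hclow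
  set chigh : Fin n → ℝ := fun j => if (j:ℕ) < k then 0 else c j with hchigh
  set cx : Fin n → ℝ := fun j => if h : (j:ℕ) < k then αx ⟨j, h⟩ else 0 with hcx
  have hxcx : x = U.mulVec cx := by
    rw [hxα, hV, firstCols_mulVec hk hkn.le]
  -- basic positivity
  have hgk0 : 0 ≤ gk := hgnn _ (hnonneg ik)
  have hγgk1 : 0 < γ * gk1 := mul_pos hγ hgk1
  have hG : 0 < G := Real.sqrt_pos.mpr hγgk1
  have hsq0 : 0 ≤ sq := Real.sqrt_nonneg _
  have hW0 : 0 ≤ W := norm2_nonneg _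
  have hX0 : 0 ≤ X := norm2_nonneg _
  have hsq2 : sq ^ 2 = γ * gk := by
    rw [hsqdef]; exact Real.sq_sqrt (mul_nonneg hγ.le hgk0)
  have hG2 : G ^ 2 = γ * gk1 := by
    rw [hGdef]; exact Real.sq_sqrt hγgk1.le
  clear_value W X G sq
  -- α* = U clow
  have hαs : (V * V.transpose).mulVec xstar = U.mulVec clow := by
    rw [← Matrix.mulVec_mulVec]
    have h1 : V.transpose.mulVec xstar = fun l => c (Fin.castLE hkn.le l) := by
      funext l
      simp [hV, Matrix.mulVec, dotProduct, firstCols, hc, Matrix.transpose_apply]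
    rw [h1, hV, firstCols_mulVec hk hkn.le]
    have hext : (fun j : Fin n => if h : (j:ℕ) < k
        then (fun l : Fin k => c (Fin.castLE hkn.le l)) ⟨j, h⟩ else 0) = clow := by
      funext j
      by_cases h : (j:ℕ) < k
      · have hcast : Fin.castLE hkn.le ⟨(j:ℕ), h⟩ = j := Fin.ext rfl
        simp only [hclow, dif_pos h, if_pos h, hcast]
      · simp only [hclow, dif_neg h, if_neg h]
    rw [hext]
  -- x* = α* + U chigh
  have hccc : clow = c - chigh := by
    funext j
    simp only [hclow, hchigh, Pi.sub_apply]
    by_cases h : (j:ℕ) < k <;> simp [h]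
  have hsplit : (V * V.transpose).mulVec xstar = xstar - U.mulVec chigh := by
    rw [hαs]
    conv_rhs => rw [hxs]
    rw [← Matrix.mulVec_sub, hccc]
  -- residuals
  have hres : ∀ z, (pOmInvSqrt p ω).mulVec
      ((sampMat ω).mulVec z - ((sampMat ω).mulVec x + w))
      = A.mulVec z - A.mulVec x - w' := by
    intro z
    rw [sub_add_eq_sub_sub, Matrix.mulVec_sub, Matrix.mulVec_sub, hw', hA, pOm_samp, pOm_samp]
  set N1 := norm2 (A.mulVec xstar - A.mulVec x - w') with hN1
  have hN10 : 0 ≤ N1 := norm2_nonneg _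
  -- quadratic forms
  have hQs : xstar ⬝ᵥ (matFun U lam g).mulVec xstar = ∑ i, g (lam i) * c i ^ 2 := by
    conv_lhs => rw [hxs]
    exact quadForm_eq U hU lam g c
  have hQx : x ⬝ᵥ (matFun U lam g).mulVec x ≤ gk * X ^ 2 := by
    conv_lhs => rw [hxcx]
    rw [quadForm_eq U hU lam g cx]
    have hXcx : X = norm2 cx := by rw [hX, hxcx, norm2_mulVec_U U hU]
    calc ∑ i, g (lam i) * cx i ^ 2 ≤ ∑ i, gk * cx i ^ 2 := by
          refine Finset.sum_le_sum fun i _ => ?_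
          by_cases h : (i:ℕ) < k
          · refine mul_le_mul_of_nonneg_right ?_ (sq_nonneg _)
            rw [hgk]
            exact hgmono _ _ (hnonneg i) (hmono (by rw [Fin.le_def]; omega))
          · simp [hcx, h]
      _ = gk * ∑ i, cx i ^ 2 := (Finset.mul_sum _ _ _).symm
      _ = gk * X ^ 2 := by rw [hXcx, norm2_sq]
  have hQhigh : gk1 * norm2 chigh ^ 2 ≤ ∑ i, g (lam i) * c i ^ 2 := by
    rw [norm2_sq, Finset.mul_sum]
    refine Finset.sum_le_sum fun i _ => ?_
    by_cases h : (i:ℕ) < k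
    · simp only [hchigh, if_pos h]
      simpa using mul_nonneg (hgnn _ (hnonneg i)) (sq_nonneg (c i))
    · simp only [hchigh, if_neg h]
      refine mul_le_mul_of_nonneg_right ?_ (sq_nonneg _)
      rw [hgk1def]
      exact hgmono _ _ (hnonneg ik1) (hmono (by rw [Fin.le_def]; omega))
  have hQs0 : 0 ≤ ∑ i, g (lam i) * c i ^ 2 :=
    Finset.sum_nonneg fun i _ => mul_nonneg (hgnn _ (hnonneg i)) (sq_nonneg _)
  -- minimality at z = x
  have hminx := hmin x
  rw [hres, hres, sub_self, zero_sub, norm2_neg, hQs, ← hN1, ← hW] at hminx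
  clear_value N1
  set B := W ^ 2 + γ * (gk * X ^ 2) with hB
  have hB0 : 0 ≤ B := by
    have h1 := mul_nonneg hγ.le (mul_nonneg hgk0 (sq_nonneg X))
    rw [hB]; linarith only [h1, sq_nonneg W]
  have hγQx : γ * (x ⬝ᵥ (matFun U lam g).mulVec x) ≤ γ * (gk * X ^ 2) :=
    mul_le_mul_of_nonneg_left hQx hγ.le
  have hγQs0 : 0 ≤ γ * ∑ i, g (lam i) * c i ^ 2 := mul_nonneg hγ.le hQs0
  have hN1B : N1 ^ 2 ≤ B := by
    rw [hB]; linarith only [hminx, hγQx, hγQs0]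
  have hchB : γ * gk1 * norm2 chigh ^ 2 ≤ B := by
    have h1 : γ * (gk1 * norm2 chigh ^ 2) ≤ γ * ∑ i, g (lam i) * c i ^ 2 :=
      mul_le_mul_of_nonneg_left hQhigh hγ.le
    rw [hB]; linarith only [h1, hγQx, hminx, sq_nonneg N1]
  clear_value B
  -- sqrt B bound
  have hsB : Real.sqrt B ≤ W + sq * X := by
    have h1 : B ≤ (W + sq * X) ^ 2 := by
      have e2 : (W + sq * X) ^ 2 = W ^ 2 + 2 * (W * (sq * X)) + sq ^ 2 * X ^ 2 := by ring
      have e3 : 0 ≤ W * (sq * X) := mul_nonneg hW0 (mul_nonneg hsq0 hX0)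
      have e4 : γ * (gk * X ^ 2) = sq ^ 2 * X ^ 2 := by rw [hsq2]; ring
      rw [hB]; linarith only [e2, e3, e4]
    calc Real.sqrt B ≤ Real.sqrt ((W + sq * X) ^ 2) := Real.sqrt_le_sqrt h1
      _ = W + sq * X := Real.sqrt_sq (add_nonneg hW0 (mul_nonneg hsq0 hX0))
  have hN1sB : N1 ≤ Real.sqrt B := by
    calc N1 = Real.sqrt (N1 ^ 2) := (Real.sqrt_sq hN10).symm
      _ ≤ Real.sqrt B := Real.sqrt_le_sqrt hN1B
  have hchsB : norm2 chigh ≤ Real.sqrt B / G := by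
    rw [le_div_iff₀ hG]
    have h2 : (norm2 chigh * G) ^ 2 ≤ B := by
      have e5 : (norm2 chigh * G) ^ 2 = γ * gk1 * norm2 chigh ^ 2 := by
        rw [mul_pow, hG2]; ring
      rw [e5]; exact hchB
    calc norm2 chigh * G = Real.sqrt ((norm2 chigh * G) ^ 2) :=
          (Real.sqrt_sq (mul_nonneg (norm2_nonneg _) hG.le)).symm
      _ ≤ Real.sqrt B := Real.sqrt_le_sqrt h2
  -- Mmax ≥ 0
  have hM0 : 0 ≤ Mmax := by
    have hn0 : 0 < n := lt_trans hk hkn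
    set v : Fin n → ℝ := fun j => if j = ⟨0, hn0⟩ then 1 else 0 with hv
    have hv1 : norm2 v = 1 := by
      rw [norm2]
      rw [show ∑ j, v j ^ 2 = 1 by simp [hv, apply_ite (·^2 : ℝ → ℝ), Finset.sum_ite_eq']]
      exact Real.sqrt_one
    have h1 := hMmax v
    have h2 := norm2_nonneg (A.mulVec v)
    rw [hv1, mul_one] at h1
    linarith only [h1, h2]
  -- ratio identity
  have hratio : sq / G = Real.sqrt (gk / gk1) := by
    rw [hsqdef, hGdef, Real.sqrt_div hgk0, Real.sqrt_mul hγ.le, Real.sqrt_mul hγ.le]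
    have hsγ : Real.sqrt γ ≠ 0 := ne_of_gt (Real.sqrt_pos.mpr hγ)
    field_simp
  -- RIP step
  have hspan : (V * V.transpose).mulVec xstar - x
      = V.mulVec (V.transpose.mulVec xstar - αx) := by
    rw [Matrix.mulVec_sub, ← Matrix.mulVec_mulVec, hxα]
  set T := norm2 ((V * V.transpose).mulVec xstar - x) with hT
  have hT0 : 0 ≤ T := norm2_nonneg _
  clear_value T
  have hRIP' := hRIP _ ⟨_, hspan⟩
  rw [← hT] at hRIP'
  set R := norm2 (A.mulVec ((V * V.transpose).mulVec xstar - x)) with hR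
  have hR0 : 0 ≤ R := norm2_nonneg _
  have hm1δ : 0 < (m : ℝ) * (1 - δ) := by
    have hmpos : (0:ℝ) < m := Nat.cast_pos.mpr hm
    have h1 : (0:ℝ) < 1 - δ := by linarith only [hδ1]
    exact mul_pos hmpos h1
  have hsT : Real.sqrt ((m : ℝ) * (1 - δ)) * T ≤ R := by
    have hmpos : (0:ℝ) < m := Nat.cast_pos.mpr hm
    have h1 : (m : ℝ) * (1 - δ) * T ^ 2 ≤ R ^ 2 := by
      have h3 : (m : ℝ) * ((1 - δ) * T ^ 2) ≤ (m : ℝ) * ((1 / m) * R ^ 2) :=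
        mul_le_mul_of_nonneg_left hRIP' hmpos.le
      have h4 : (m : ℝ) * ((1 / m) * R ^ 2) = R ^ 2 := by field_simp
      linarith only [h3, h4]
    calc Real.sqrt ((m : ℝ) * (1 - δ)) * T
        = Real.sqrt ((m : ℝ) * (1 - δ) * T ^ 2) := by
          rw [Real.sqrt_mul hm1δ.le, Real.sqrt_sq hT0]
      _ ≤ Real.sqrt (R ^ 2) := Real.sqrt_le_sqrt h1
      _ = R := Real.sqrt_sq hR0
  -- decomposition of the residual of α* - x
  have hdec : A.mulVec ((V * V.transpose).mulVec xstar - x)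
      = (A.mulVec xstar - A.mulVec x - w') + (-(A.mulVec (U.mulVec chigh))) + w' := by
    rw [hsplit, Matrix.mulVec_sub, Matrix.mulVec_sub]
    abel
  have e1 : R ≤ N1 + Mmax * norm2 chigh + W := by
    have t1 : R = norm2 ((A.mulVec xstar - A.mulVec x - w') + (-(A.mulVec (U.mulVec chigh)))
        + w') := by rw [hR, hdec]
    have t2 := norm2_add_le ((A.mulVec xstar - A.mulVec x - w')
        + (-(A.mulVec (U.mulVec chigh)))) w'
    have t3 := norm2_add_le (A.mulVec xstar - A.mulVec x - w') (-(A.mulVec (U.mulVec chigh)))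
    have t4 : norm2 (-(A.mulVec (U.mulVec chigh))) = norm2 (A.mulVec (U.mulVec chigh)) :=
      norm2_neg _
    have t5 := hMmax (U.mulVec chigh)
    have t6 : norm2 (U.mulVec chigh) = norm2 chigh := norm2_mulVec_U U hU chigh
    rw [t1]
    rw [t6] at t5
    linarith only [t2, t3, t4, t5, hN1, hW]
  have e2 : N1 ≤ W + sq * X := le_trans hN1sB hsB
  have e3 : Mmax * norm2 chigh ≤ Mmax * (W / G) + Mmax * Real.sqrt (gk / gk1) * X := by
    have h4 : norm2 chigh ≤ (W + sq * X) / G :=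
      le_trans hchsB ((div_le_div_iff_of_pos_right hG).mpr hsB)
    have h5 : (W + sq * X) / G = W / G + Real.sqrt (gk / gk1) * X := by
      rw [add_div, ← hratio]; ring
    calc Mmax * norm2 chigh ≤ Mmax * ((W + sq * X) / G) := mul_le_mul_of_nonneg_left h4 hM0
      _ = Mmax * (W / G) + Mmax * Real.sqrt (gk / gk1) * X := by rw [h5]; ring
  have hchain : Real.sqrt ((m : ℝ) * (1 - δ)) * T
      ≤ (2 + Mmax / G) * W + (Mmax * Real.sqrt (gk / gk1) + sq) * X := by
    have h6 := le_trans hsT e1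
    have e4 : Mmax * (W / G) = Mmax / G * W := by ring
    linarith only [h6, e2, e3, e4]
  -- conclude
  have hs : 0 < Real.sqrt ((m : ℝ) * (1 - δ)) := Real.sqrt_pos.mpr hm1δ
  rw [one_div, inv_mul_eq_div, le_div_iff₀ hs]
  calc T * Real.sqrt ((m : ℝ) * (1 - δ)) = Real.sqrt ((m : ℝ) * (1 - δ)) * T := mul_comm _ _
    _ ≤ _ := hchain
end

section
/- (Efficient decoder, out-of-span component bound.) Let g: ℝ → ℝ be nonnegative and nondecreasing on [0,∞) with g(λ_{k+1}) > 0, and let γ > 0. For every x ∈ span(U_k) and w ∈ ℝ^m, let x* be a minimizer over z ∈ ℝ^n of ‖P_Ω^{−1/2}(M z − y)‖₂² + γ zᵀ g(L) z with y = M x + w, and set β* := (I − U_k U_kᵀ) x*. Then ‖β*‖₂ ≤ (1/√(γ g(λ_{k+1})))‖P_Ω^{−1/2} w‖₂ + √(g(λ_k)/g(λ_{k+1}))‖x‖₂. -/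
open Matrix

private lemma sqrt_add_le' (a b : ℝ) (ha : 0 ≤ a) (hb : 0 ≤ b) :
    Real.sqrt (a + b) ≤ Real.sqrt a + Real.sqrt b := by
  have h1 := Real.sq_sqrt ha
  have h2 := Real.sq_sqrt hb
  have h3 := Real.sqrt_nonneg a
  have h4 := Real.sqrt_nonneg b
  have h5 : Real.sqrt (a + b) ≤ Real.sqrt ((Real.sqrt a + Real.sqrt b) ^ 2) := by
    apply Real.sqrt_le_sqrt; nlinarith
  rwa [Real.sqrt_sq (by positivity)] at h5

/-- Efficient decoder, bound on the out-of-span component `β* = (I - U_k U_kᵀ) x*`. -/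
theorem efficient_decoder_beta_bound (n k m : ℕ) (hk : 0 < k) (hkn : k < n) (hm : 0 < m)
    (U : Matrix (Fin n) (Fin n) ℝ) (hU : U.transpose * U = 1)
    (lam : Fin n → ℝ) (hmono : Monotone lam) (hnonneg : ∀ i, 0 ≤ lam i)
    (ik ik1 : Fin n) (hik : (ik : ℕ) = k - 1) (hik1 : (ik1 : ℕ) = k)
    (p : Fin n → ℝ) (hp : ∀ i, 0 < p i) (hpsum : ∑ i, p i = 1)
    (ω : Fin m → Fin n)
    (g : ℝ → ℝ) (hgnn : ∀ t, 0 ≤ t → 0 ≤ g t)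
    (hgmono : ∀ s t, 0 ≤ s → s ≤ t → g s ≤ g t)
    (hgk1 : 0 < g (lam ik1))
    (γ : ℝ) (hγ : 0 < γ)
    (x : Fin n → ℝ) (hx : ∃ α : Fin k → ℝ, x = (firstCols hkn.le U).mulVec α)
    (w : Fin m → ℝ)
    (xstar : Fin n → ℝ)
    (hmin : ∀ z : Fin n → ℝ,
      norm2 ((pOmInvSqrt p ω).mulVec
            ((sampMat ω).mulVec xstar - ((sampMat ω).mulVec x + w))) ^ 2
          + γ * (xstar ⬝ᵥ (matFun U lam g).mulVec xstar)
        ≤ norm2 ((pOmInvSqrt p ω).mulVec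
            ((sampMat ω).mulVec z - ((sampMat ω).mulVec x + w))) ^ 2
          + γ * (z ⬝ᵥ (matFun U lam g).mulVec z)) :
    norm2 (xstar - (firstCols hkn.le U * (firstCols hkn.le U).transpose).mulVec xstar)
      ≤ (1 / Real.sqrt (γ * g (lam ik1))) * norm2 ((pOmInvSqrt p ω).mulVec w)
        + Real.sqrt (g (lam ik) / g (lam ik1)) * norm2 x := by
  classical
  set Uk := firstCols hkn.le U with hUkdef
  have hUUt : U * Uᵀ = 1 := mul_eq_one_comm.mp hU
  -- squared norm = sum of squares
  have hn2sq : ∀ {d : ℕ} (v : Fin d → ℝ), norm2 v ^ 2 = ∑ j, v j ^ 2 := by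
    intro d v
    exact Real.sq_sqrt (Finset.sum_nonneg fun j _ => sq_nonneg _)
  -- orthogonality: sums of squares preserved by Uᵀ
  have horth : ∀ v : Fin n → ℝ, ∑ i, (Uᵀ.mulVec v i) ^ 2 = ∑ i, v i ^ 2 := by
    intro v
    have h1 : ∑ i, (Uᵀ.mulVec v i) ^ 2 = (Uᵀ.mulVec v) ⬝ᵥ (Uᵀ.mulVec v) := by
      simp [dotProduct, sq]
    have h2 : (Uᵀ.mulVec v) ⬝ᵥ (Uᵀ.mulVec v) = v ⬝ᵥ v := by
      rw [Matrix.dotProduct_mulVec, ← Matrix.mulVec_transpose, Matrix.mulVec_mulVec,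
        Matrix.transpose_transpose, hUUt, Matrix.one_mulVec]
    rw [h1, h2]
    simp [dotProduct, sq]
  -- quadratic form diagonalization
  have hquad : ∀ z : Fin n → ℝ,
      z ⬝ᵥ (matFun U lam g).mulVec z = ∑ i, g (lam i) * (Uᵀ.mulVec z i) ^ 2 := by
    intro z
    have h1 : (matFun U lam g).mulVec z
        = U.mulVec ((Matrix.diagonal fun i => g (lam i)).mulVec (Uᵀ.mulVec z)) := by
      rw [Matrix.mulVec_mulVec, Matrix.mulVec_mulVec, matFun]
    rw [h1, Matrix.dotProduct_mulVec (v := z) (A := U), ← Matrix.mulVec_transpose]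
    simp only [dotProduct, Matrix.mulVec_diagonal]
    apply Finset.sum_congr rfl
    intro i _
    ring
  -- structure of Uᵀ * Uk
  have hUtUk : ∀ (i : Fin n) (t : Fin k),
      (Uᵀ * Uk) i t = if i = Fin.castLE hkn.le t then 1 else 0 := by
    intro i t
    have : (Uᵀ * Uk) i t = (Uᵀ * U) i (Fin.castLE hkn.le t) := by
      simp [Matrix.mul_apply, hUkdef, firstCols]
    rw [this, hU, Matrix.one_apply]
  -- action on the projector
  have hproj : ∀ (v : Fin n → ℝ) (i : Fin n),
      (Uᵀ.mulVec ((Uk * Ukᵀ).mulVec v)) i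
        = if (i : ℕ) < k then (Uᵀ.mulVec v) i else 0 := by
    intro v i
    have h1 : Uᵀ.mulVec ((Uk * Ukᵀ).mulVec v)
        = (Uᵀ * Uk).mulVec (Ukᵀ.mulVec v) := by
      rw [Matrix.mulVec_mulVec, Matrix.mulVec_mulVec, Matrix.mul_assoc]
    rw [h1]
    have h2 : (Uᵀ * Uk).mulVec (Ukᵀ.mulVec v) i
        = ∑ t, (if i = Fin.castLE hkn.le t then 1 else 0) * (Ukᵀ.mulVec v) t := by
      simp only [Matrix.mulVec, dotProduct]
      exact Finset.sum_congr rfl fun t _ => by rw [hUtUk]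
    rw [h2]
    by_cases hi : (i : ℕ) < k
    · set t0 : Fin k := ⟨(i : ℕ), hi⟩ with ht0
      have hcast : Fin.castLE hkn.le t0 = i := by
        apply Fin.ext; simp [ht0]
      have hiff : ∀ t : Fin k, (i = Fin.castLE hkn.le t) ↔ t = t0 := by
        intro t
        constructor
        · intro h; apply Fin.ext
          have : (i : ℕ) = (t : ℕ) := by rw [h]; simp
          simp [ht0, ← this]
        · intro h; rw [h, hcast]
      rw [Finset.sum_eq_single t0 (fun t _ ht =>
          by rw [if_neg (fun h => ht ((hiff t).mp h)), zero_mul])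
        (fun h => absurd (Finset.mem_univ t0) h)]
      rw [if_pos hcast.symm, one_mul, if_pos hi]
      simp only [Matrix.mulVec, dotProduct, Matrix.transpose_apply, hUkdef, firstCols,
        Matrix.of_apply]
      apply Finset.sum_congr rfl
      intro l _
      rw [hcast]
    · rw [if_neg hi]
      apply Finset.sum_eq_zero
      intro t _
      have : ¬ (i = Fin.castLE hkn.le t) := by
        intro h
        apply hi
        rw [h]
        exact t.isLt
      rw [if_neg this, zero_mul]
  -- x has no components beyond k
  have hxa : ∀ i : Fin n, k ≤ (i : ℕ) → (Uᵀ.mulVec x) i = 0 := by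
    intro i hi
    obtain ⟨α, hα⟩ := hx
    rw [hα, Matrix.mulVec_mulVec]
    have h2 : (Uᵀ * Uk).mulVec α i
        = ∑ t, (if i = Fin.castLE hkn.le t then 1 else 0) * α t := by
      simp only [Matrix.mulVec, dotProduct]
      exact Finset.sum_congr rfl fun t _ => by rw [hUtUk]
    rw [h2]
    apply Finset.sum_eq_zero
    intro t _
    have : ¬ (i = Fin.castLE hkn.le t) := by
      intro h
      have := t.isLt
      rw [h] at hi
      simp at hi
      omega
    rw [if_neg this, zero_mul]
  set c : Fin n → ℝ := Uᵀ.mulVec xstar with hc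
  set g1 := g (lam ik1) with hg1
  set g0 := g (lam ik) with hg0
  have hg0nn : 0 ≤ g0 := hgnn _ (hnonneg ik)
  set SW := ∑ i, ((pOmInvSqrt p ω).mulVec w i) ^ 2 with hSW
  set T := ∑ i : Fin n, (if k ≤ (i : ℕ) then c i ^ 2 else 0) with hT
  have hTnn : 0 ≤ T := Finset.sum_nonneg fun i _ => by positivity
  have hSWnn : 0 ≤ SW := Finset.sum_nonneg fun i _ => sq_nonneg _
  have hSx : norm2 x ^ 2 = ∑ i, x i ^ 2 := hn2sq x
  have hSxnn : 0 ≤ ∑ i, x i ^ 2 := Finset.sum_nonneg fun i _ => sq_nonneg _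
  -- main inequality from minimality at z = x
  have hmain : γ * g1 * T ≤ SW + γ * (g0 * ∑ i, x i ^ 2) := by
    have h0 := hmin x
    have hxy : (sampMat ω).mulVec x - ((sampMat ω).mulVec x + w) = -w := by
      funext i; simp
    rw [hxy] at h0
    have hnegw : norm2 ((pOmInvSqrt p ω).mulVec (-w)) ^ 2 = SW := by
      rw [hn2sq, hSW]
      apply Finset.sum_congr rfl
      intro i _
      rw [Matrix.mulVec_neg]
      simp
    rw [hnegw] at h0
    have hdrop : γ * (xstar ⬝ᵥ (matFun U lam g).mulVec xstar)
        ≤ SW + γ * (x ⬝ᵥ (matFun U lam g).mulVec x) := by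
      have := sq_nonneg (norm2 ((pOmInvSqrt p ω).mulVec
        ((sampMat ω).mulVec xstar - ((sampMat ω).mulVec x + w))))
      linarith
    -- lower bound for quadratic form at xstar
    have hlow : g1 * T ≤ xstar ⬝ᵥ (matFun U lam g).mulVec xstar := by
      rw [hquad xstar]
      have : g1 * T = ∑ i : Fin n, (if k ≤ (i : ℕ) then g1 * c i ^ 2 else 0) := by
        rw [hT, Finset.mul_sum]
        apply Finset.sum_congr rfl
        intro i _
        split <;> simp
      rw [this]
      apply Finset.sum_le_sum
      intro i _
      by_cases hi : k ≤ (i : ℕ)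
      · rw [if_pos hi]
        have hle : lam ik1 ≤ lam i := by
          apply hmono
          rw [Fin.le_def, hik1]
          exact hi
        have := hgmono (lam ik1) (lam i) (hnonneg ik1) hle
        have := sq_nonneg (c i)
        nlinarith
      · rw [if_neg hi]
        have := hgnn (lam i) (hnonneg i)
        positivity
    -- upper bound for quadratic form at x
    have hup : x ⬝ᵥ (matFun U lam g).mulVec x ≤ g0 * ∑ i, x i ^ 2 := by
      rw [hquad x, ← horth x, Finset.mul_sum]
      apply Finset.sum_le_sum
      intro i _
      by_cases hi : (i : ℕ) < k
      · have hle : lam i ≤ lam ik := by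
          apply hmono
          rw [Fin.le_def, hik]
          omega
        have := hgmono (lam i) (lam ik) (hnonneg i) hle
        have := sq_nonneg (Uᵀ.mulVec x i)
        nlinarith
      · rw [hxa i (by omega)]
        simp
    have l1 := mul_le_mul_of_nonneg_left hlow hγ.le
    have l2 := mul_le_mul_of_nonneg_left hup hγ.le
    linarith
  -- identify the out-of-span component
  have hbeta : norm2 (xstar - (Uk * Ukᵀ).mulVec xstar) = Real.sqrt T := by
    rw [norm2]
    congr 1
    rw [← horth (xstar - (Uk * Ukᵀ).mulVec xstar), hT]
    apply Finset.sum_congr rfl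
    intro i _
    rw [Matrix.mulVec_sub, Pi.sub_apply, hproj xstar i]
    by_cases hi : (i : ℕ) < k
    · rw [if_pos hi, if_neg (by omega)]
      simp [hc]
    · rw [if_neg hi, if_pos (by omega)]
      simp [hc]
  rw [hbeta]
  -- final computation
  have hγg1 : 0 < γ * g1 := mul_pos hγ hgk1
  have hTle : T ≤ SW / (γ * g1) + (g0 / g1) * ∑ i, x i ^ 2 := by
    have h' : T ≤ (SW + γ * (g0 * ∑ i : Fin n, x i ^ 2)) / (γ * g1) := by
      rw [le_div_iff₀ hγg1]
      calc T * (γ * g1) = γ * g1 * T := by ring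
        _ ≤ _ := hmain
    calc T ≤ _ := h'
      _ = SW / (γ * g1) + (g0 / g1) * ∑ i : Fin n, x i ^ 2 := by
        field_simp
  have h1 : Real.sqrt T ≤ Real.sqrt (SW / (γ * g1) + (g0 / g1) * ∑ i, x i ^ 2) :=
    Real.sqrt_le_sqrt hTle
  have h2 : Real.sqrt (SW / (γ * g1) + (g0 / g1) * ∑ i, x i ^ 2)
      ≤ Real.sqrt (SW / (γ * g1)) + Real.sqrt ((g0 / g1) * ∑ i, x i ^ 2) := by
    apply sqrt_add_le'
    · positivity
    · positivity
  have h3 : Real.sqrt (SW / (γ * g1)) = (1 / Real.sqrt (γ * g1)) * norm2 ((pOmInvSqrt p ω).mulVec w) := by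
    rw [Real.sqrt_div hSWnn, norm2, hSW, one_div, div_eq_inv_mul]
  have h4 : Real.sqrt ((g0 / g1) * ∑ i, x i ^ 2) = Real.sqrt (g0 / g1) * norm2 x := by
    rw [Real.sqrt_mul (by positivity), norm2]
  linarith [h1, h2, h3.le, h3.ge, h4.le, h4.ge]
end

section
/- For every δ ∈ [0,1), one has e^{−δ}/(1−δ)^{1−δ} ≤ exp(−δ²/3). -/
/-- For every `δ ∈ [0,1)`, `e^{-δ}/(1-δ)^{1-δ} ≤ exp(-δ²/3)`. -/
theorem chernoff_lower_bound_ineq (δ : ℝ) (h0 : 0 ≤ δ) (h1 : δ < 1) :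
    Real.exp (-δ) / (1 - δ) ^ (1 - δ) ≤ Real.exp (-δ ^ 2 / 3) := by
  have hu : (0:ℝ) < 1 - δ := by linarith
  set s : ℝ := (δ - δ ^ 2 / 3) / (1 - δ) with hs
  have hs0 : 0 ≤ s := by
    apply div_nonneg _ hu.le
    nlinarith
  -- exp s ≥ 1 + s + s^2/2
  have hexp : 1 + s + s ^ 2 / 2 ≤ Real.exp s := by
    have := Real.sum_le_exp_of_nonneg hs0 3
    simp [Finset.sum_range_succ, Nat.factorial] at this
    nlinarith [this]
  -- (1-δ) * exp s ≥ 1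
  have hkey : 1 ≤ (1 - δ) * Real.exp s := by
    have h2 : (1 - δ) * (1 + s + s ^ 2 / 2) ≥ 1 := by
      have hsu : s * (1 - δ) = δ - δ ^ 2 / 3 := by
        rw [hs, div_mul_cancel₀ _ hu.ne']
      nlinarith [sq_nonneg (δ - δ^2/3), sq_nonneg s, sq_nonneg δ]
    nlinarith [Real.exp_pos s]
  -- so log (1-δ) ≥ -s
  have hlog : -s ≤ Real.log (1 - δ) := by
    rw [Real.le_log_iff_exp_le hu, Real.exp_neg]
    rw [inv_le_iff_one_le_mul₀ (Real.exp_pos s)]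
    linarith [hkey]
  have hmul : δ ^ 2 / 3 - δ ≤ (1 - δ) * Real.log (1 - δ) := by
    have := mul_le_mul_of_nonneg_left hlog hu.le
    have hsu : (1 - δ) * s = δ - δ ^ 2 / 3 := by
      rw [hs, mul_comm, div_mul_cancel₀ _ hu.ne']
    nlinarith [this]
  rw [Real.rpow_def_of_pos hu, ← Real.exp_sub, Real.exp_le_exp]
  nlinarith [hmul]
end

section
/- For every δ ∈ [0,1], one has e^{δ}/(1+δ)^{1+δ} ≤ exp(−δ²/3). -/
lemma log_ge_pade (x : ℝ) (hx : 0 ≤ x) : 2 * x / (2 + x) ≤ Real.log (1 + x) := by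
  set f : ℝ → ℝ := fun y => Real.log (1 + y) - 2 * y / (2 + y) with hf
  have key : ∀ y ∈ Set.Ici (0:ℝ),
      HasDerivAt f (1 / (1 + y) - 4 / (2 + y) ^ 2) y := by
    intro y hy
    have hy0 : (0:ℝ) ≤ y := hy
    have h1y : (0:ℝ) < 1 + y := by linarith
    have h2y : (0:ℝ) < 2 + y := by linarith
    have hlog : HasDerivAt (fun y : ℝ => Real.log (1 + y)) (1 / (1 + y)) y := by
      have := (Real.hasDerivAt_log h1y.ne').comp y
        ((hasDerivAt_const y (1:ℝ)).add (hasDerivAt_id y))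
      exact this.congr_deriv (by simp)
    have hq : HasDerivAt (fun y : ℝ => 2 * y / (2 + y)) (4 / (2 + y) ^ 2) y := by
      have hnum : HasDerivAt (fun y : ℝ => 2 * y) 2 y := by
        simpa using (hasDerivAt_id y).const_mul (2:ℝ)
      have hden : HasDerivAt (fun y : ℝ => 2 + y) 1 y := by
        simpa using (hasDerivAt_id' y).const_add (2:ℝ)
      have := hnum.div hden h2y.ne'
      exact this.congr_deriv (by ring)
    exact hlog.sub hq
  have hmono : MonotoneOn f (Set.Ici (0:ℝ)) := by
    apply monotoneOn_of_deriv_nonneg (convex_Ici 0)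
    · exact fun y hy => ((key y hy).continuousAt).continuousWithinAt
    · intro y hy
      have hy' : y ∈ Set.Ici (0:ℝ) := le_of_lt (by simpa using hy)
      exact ((key y hy').hasDerivWithinAt).differentiableWithinAt
    · intro y hy
      have hy0 : (0:ℝ) < y := by simpa using hy
      have hy' : y ∈ Set.Ici (0:ℝ) := le_of_lt hy0
      have hd : deriv f y = 1 / (1 + y) - 4 / (2 + y) ^ 2 := (key y hy').deriv
      rw [hd]
      have h1y : (0:ℝ) < 1 + y := by linarith
      have h2y : (0:ℝ) < 2 + y := by linarith
      rw [sub_nonneg, div_le_div_iff₀ (by positivity) h1y]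
      nlinarith [sq_nonneg y]
  have h0 : f 0 = 0 := by simp [hf]
  have := hmono (Set.self_mem_Ici) (by exact hx : x ∈ Set.Ici (0:ℝ)) hx
  rw [h0] at this
  simpa [hf, sub_nonneg] using this

/-- For every `δ ∈ [0,1]`, `e^{δ}/(1+δ)^{1+δ} ≤ exp(-δ²/3)`. -/
theorem chernoff_upper_bound_ineq (δ : ℝ) (h0 : 0 ≤ δ) (h1 : δ ≤ 1) :
    Real.exp δ / (1 + δ) ^ (1 + δ) ≤ Real.exp (-δ ^ 2 / 3) := by
  have h1d : (0:ℝ) < 1 + δ := by linarith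
  have hrpow : (1 + δ) ^ (1 + δ) = Real.exp ((1 + δ) * Real.log (1 + δ)) := by
    rw [Real.rpow_def_of_pos h1d, mul_comm]
  rw [hrpow, div_le_iff₀ (Real.exp_pos _), ← Real.exp_add, Real.exp_le_exp]
  have hlog := log_ge_pade δ h0
  have h2d : (0:ℝ) < 2 + δ := by linarith
  have hstep : δ + δ ^ 2 / 3 ≤ (1 + δ) * (2 * δ / (2 + δ)) := by
    rw [mul_div_assoc', le_div_iff₀ h2d]
    nlinarith [sq_nonneg δ, mul_nonneg h0 h0]
  have : δ + δ ^ 2 / 3 ≤ (1 + δ) * Real.log (1 + δ) := by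
    refine hstep.trans ?_
    exact mul_le_mul_of_nonneg_left hlog (by linarith)
  linarith
end
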